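/- If ω₁₁, ω₁₃ are complex numbers with |2ω₁₃ − ω₁₁²| ≤ 1, |ω₁₁| ≤ 1, and 3|ω₁₃|² ≤ 1 − |ω₁₁|², then 2|ω₁₃|·|4ω₁₃² − ω₁₁⁴| ≤ 4/3. -/

import Mathlib

theorem B1_bound (ω11 ω13 : ℂ)
    (h1 : ‖2*ω13 - ω11^2‖ ≤ 1)
    (h2 : ‖ω11‖ ≤ 1)
    (h3 : 3 * ‖ω13‖^2 ≤ 1 - ‖ω11‖^2) :
    2 * ‖ω13‖ * ‖4*ω13^2 - ω11^4‖ ≤ 4/3 := by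
  set a := ‖ω13‖ with ha
  set b := ‖ω11‖ with hb
  have ha0 : 0 ≤ a := norm_nonneg _
  have hb0 : 0 ≤ b := norm_nonneg _
  have hfac : (4*ω13^2 - ω11^4) = (2*ω13 - ω11^2) * (2*ω13 + ω11^2) := by ring
  have habs : ‖4*ω13^2 - ω11^4‖ ≤ 1 * (2*a + b^2) := by
    rw [hfac, norm_mul]
    apply mul_le_mul h1 ?_ (norm_nonneg _) zero_le_one
    calc ‖2*ω13 + ω11^2‖ ≤ ‖2*ω13‖ + ‖ω11^2‖ :=
          norm_add_le _ _
      _ = 2*a + b^2 := by simp [map_mul, map_pow, ha, hb]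
  have hle : a ≤ 2/3 := by nlinarith [sq_nonneg b]
  calc 2 * a * ‖4*ω13^2 - ω11^4‖ ≤ 2 * a * (1 * (2*a + b^2)) := by
        apply mul_le_mul_of_nonneg_left habs (by positivity)
    _ ≤ 4/3 := by nlinarith [sq_nonneg b, mul_nonneg ha0 (sq_nonneg b)]
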